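/- For every Borel subset A of Ω̃ that is invariant under order-isomorphism (i.e., whenever r₁, r₂ ∈ Ω̃ give order-isomorphic posets (ℕ, r₁) ≅ (ℕ, r₂) and r₁ ∈ A, then r₂ ∈ A), there exists a set B in the σ-algebra generated by the stem sets such that the symmetric difference A Δ B is contained in the set Θ̃ of all r ∈ Ω̃ whose poset (ℕ, r) is rogue. (Proposition 2.) -/

import Mathlib

open MeasureTheory

def PastFinite {α : Type} (le : α → α → Prop) : Prop := ∀ x : α, {y : α | le y x}.Finite

def IsStemIn {α : Type} {n : ℕ} (s : Fin n → Fin n → Prop) (le : α → α → Prop) : Prop :=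
  ∃ f : Fin n → α, Function.Injective f ∧ (∀ i j, s i j ↔ le (f i) (f j)) ∧
    ∀ (x : α) (j : Fin n), le x (f j) → ∃ i, f i = x

def SameStems {α β : Type} (le₁ : α → α → Prop) (le₂ : β → β → Prop) : Prop :=
  ∀ (n : ℕ) (s : Fin n → Fin n → Prop), IsStemIn s le₁ ↔ IsStemIn s le₂

def OrderIsoRel {α β : Type} (le₁ : α → α → Prop) (le₂ : β → β → Prop) : Prop :=
  ∃ e : α ≃ β, ∀ x y : α, le₁ x y ↔ le₂ (e x) (e y)

def LtRel {α : Type} (le : α → α → Prop) (x y : α) : Prop := le x y ∧ x ≠ y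

def IsMaximalRel {α : Type} (le : α → α → Prop) (x : α) : Prop := ∀ y, le x y → y = x

def ChainTo {α : Type} (le : α → α → Prop) (x : α) (k : ℕ) : Prop :=
  ∃ f : Fin (k + 1) → α, (∀ i j : Fin (k + 1), i < j → LtRel le (f i) (f j)) ∧ f (Fin.last k) = x

def HasLevel {α : Type} (le : α → α → Prop) (x : α) (k : ℕ) : Prop :=
  ChainTo le x k ∧ ∀ m, ChainTo le x m → m ≤ k

def IsRogueRel {α : Type} (le : α → α → Prop) : Prop :=
  ∃ (β : Type) (le' : β → β → Prop), IsPartialOrder β le' ∧ Countable β ∧ PastFinite le' ∧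
    ¬ OrderIsoRel le le' ∧ SameStems le le'

def OmegaT : Set ((ℕ × ℕ) → Bool) :=
  {r | (∀ x y z : ℕ, r (x, y) = true → r (y, z) = true → r (x, z) = true) ∧
       (∀ x y : ℕ, r (x, y) = true → x < y)}

def leOf (r : OmegaT) (x y : ℕ) : Prop := x = y ∨ (r : (ℕ × ℕ) → Bool) (x, y) = true

def stemSet (n : ℕ) (s : Fin n → Fin n → Prop) : Set OmegaT :=
  {r | IsStemIn s (leOf r)}

def stemFamily : Set (Set OmegaT) :=
  {S | ∃ (n : ℕ) (s : Fin n → Fin n → Prop), IsPartialOrder (Fin n) s ∧ S = stemSet n s}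

def cyl (n : ℕ) (s : Fin n → Fin n → Bool) : Set OmegaT :=
  {r | ∀ i j : Fin n, (r : (ℕ × ℕ) → Bool) ((i : ℕ), (j : ℕ)) = s i j}

def IsFinCauset (n : ℕ) (s : Fin n → Fin n → Bool) : Prop :=
  (∀ i j k : Fin n, s i j = true → s j k = true → s i k = true) ∧
  (∀ i j : Fin n, s i j = true → (i : ℕ) < (j : ℕ))

def cylFamily : Set (Set OmegaT) :=
  {C | ∃ (n : ℕ) (s : Fin n → Fin n → Bool), IsFinCauset n s ∧ C = cyl n s}

def IsoInvariant (A : Set OmegaT) : Prop :=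
  ∀ r₁ r₂ : OmegaT, OrderIsoRel (leOf r₁) (leOf r₂) → r₁ ∈ A → r₂ ∈ A

def ThetaT : Set OmegaT := {r | IsRogueRel (leOf r)}

------------------------------------------------------------------------------
-- AUXILIARY DEVELOPMENT
------------------------------------------------------------------------------

attribute [local instance] Classical.propDecidable

namespace P2

/-- Labeled finite causet codes. -/
abbrev LC : Type := Σ n : ℕ, Fin n → Fin n → Bool

/-- The reflexive partial order associated to a code. -/
def relFin (v : LC) : Fin v.1 → Fin v.1 → Prop := fun i j => i = j ∨ v.2 i j = true

/-- Naturally labeled and transitive code. -/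
def NB (v : LC) : Prop :=
  (∀ i j, v.2 i j = true → (i : ℕ) < (j : ℕ)) ∧
  (∀ i j k, v.2 i j = true → v.2 j k = true → v.2 i k = true)

/-- `d` end-extends `c`. -/
def endExt (c d : LC) : Prop :=
  c.1 ≤ d.1 ∧ ∀ (i j : ℕ) (hi : i < c.1) (hj : j < c.1) (hi' : i < d.1) (hj' : j < d.1),
    d.2 ⟨i, hi'⟩ ⟨j, hj'⟩ = c.2 ⟨i, hi⟩ ⟨j, hj⟩

/-- the code `v` is realized as a stem of `r`. -/
def Rz (v : LC) (r : OmegaT) : Prop := IsStemIn (relFin v) (leOf r)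

/-- `v` is a stem in the finite causet `w`. -/
def EmbD (v w : LC) : Prop := IsStemIn (relFin v) (relFin w)

section basic
variable {r : OmegaT}

lemma r_trans {x y z : ℕ} (h1 : r.1 (x, y) = true) (h2 : r.1 (y, z) = true) :
    r.1 (x, z) = true := r.2.1 x y z h1 h2

lemma r_lt {x y : ℕ} (h : r.1 (x, y) = true) : x < y := r.2.2 x y h

lemma leOf_refl (x : ℕ) : leOf r x x := Or.inl rfl

lemma leOf_trans {x y z : ℕ} (h1 : leOf r x y) (h2 : leOf r y z) : leOf r x z := by
  rcases h1 with rfl | h1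
  · exact h2
  · rcases h2 with rfl | h2
    · exact Or.inr h1
    · exact Or.inr (r_trans h1 h2)

lemma leOf_le {x y : ℕ} (h : leOf r x y) : x ≤ y := by
  rcases h with rfl | h
  · exact le_refl _
  · exact le_of_lt (r_lt h)

lemma leOf_antisymm {x y : ℕ} (h1 : leOf r x y) (h2 : leOf r y x) : x = y :=
  le_antisymm (leOf_le h1) (leOf_le h2)

lemma isPartialOrder_leOf (r : OmegaT) : IsPartialOrder ℕ (leOf r) :=
  { refl := leOf_refl
    trans := fun _ _ _ => leOf_trans
    antisymm := fun _ _ => leOf_antisymm }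

lemma pastFinite_leOf (r : OmegaT) : PastFinite (leOf r) := fun x =>
  (Set.finite_le_nat x).subset fun _ hy => leOf_le hy

lemma orderIsoRel_symm {α β : Type} {le₁ : α → α → Prop} {le₂ : β → β → Prop}
    (h : OrderIsoRel le₁ le₂) : OrderIsoRel le₂ le₁ := by
  obtain ⟨e, he⟩ := h
  refine ⟨e.symm, fun x y => ?_⟩
  have := he (e.symm x) (e.symm y)
  rw [e.apply_symm_apply, e.apply_symm_apply] at this
  exact this.symm

/-- transitivity of stems. -/
lemma stemTrans {n m : ℕ} {s : Fin n → Fin n → Prop} {w : Fin m → Fin m → Prop} {α : Type}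
    {le : α → α → Prop} (h1 : IsStemIn s w) (h2 : IsStemIn w le) : IsStemIn s le := by
  obtain ⟨f, hfi, hff, hfd⟩ := h1
  obtain ⟨F, hFi, hFf, hFd⟩ := h2
  refine ⟨F ∘ f, hFi.comp hfi, fun i j => (hff i j).trans (hFf _ _), ?_⟩
  intro x j hx
  obtain ⟨i', hi'⟩ := hFd x (f j) hx
  have hw : w i' (f j) := (hFf i' (f j)).mpr (hi' ▸ hx)
  obtain ⟨i, hi⟩ := hfd i' j hw
  exact ⟨i, by simp [Function.comp, hi, hi']⟩

lemma isPartialOrder_relFin {v : LC} (hv : NB v) : IsPartialOrder (Fin v.1) (relFin v) :=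
  { refl := fun i => Or.inl rfl
    trans := by
      rintro a b c (rfl | h1) h2
      · exact h2
      · rcases h2 with rfl | h2
        · exact Or.inr h1
        · exact Or.inr (hv.2 _ _ _ h1 h2)
    antisymm := by
      rintro a b (rfl | h1) h2
      · rfl
      · rcases h2 with rfl | h2
        · rfl
        · exact absurd (hv.1 _ _ h2) (Nat.lt_asymm (hv.1 _ _ h1)) }

lemma stemSet_mem_family {v : LC} (hv : NB v) :
    MeasurableSet[MeasurableSpace.generateFrom stemFamily] {r : OmegaT | Rz v r} :=
  MeasurableSpace.measurableSet_generateFrom ⟨v.1, relFin v, isPartialOrder_relFin hv, rfl⟩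

end basic

/-- From any realized stem, a natural code realizing it, through which the stem factors. -/
lemma exists_code_of_stem {r : OmegaT} {n : ℕ} {s : Fin n → Fin n → Prop}
    (hs : IsStemIn s (leOf r)) :
    ∃ v : LC, NB v ∧ IsStemIn s (relFin v) ∧ Rz v r := by
  obtain ⟨f, hfi, hff, hfd⟩ := hs
  set D : Finset ℕ := Finset.image f Finset.univ with hD
  have hcard : D.card = n := by
    rw [hD, Finset.card_image_of_injective _ hfi, Finset.card_univ, Fintype.card_fin]
  set eD : Fin D.card ≃o {x // x ∈ D} := D.orderIsoOfFin rfl with heD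
  set v : LC := ⟨D.card, fun a b => (r : (ℕ × ℕ) → Bool) ((eD a : ℕ), (eD b : ℕ))⟩ with hv
  have hfD : ∀ i, f i ∈ D := fun i => Finset.mem_image.mpr ⟨i, Finset.mem_univ i, rfl⟩
  set φ : Fin n → Fin D.card := fun i => eD.symm ⟨f i, hfD i⟩ with hφ
  have hφeD : ∀ i, (eD (φ i) : ℕ) = f i := fun i => by simp [hφ]
  have hφi : Function.Injective φ := by
    intro i j hij
    apply hfi
    have := congrArg (fun a => (eD a : ℕ)) hij
    simpa [hφeD] using this
  have hφsurj : Function.Surjective φ :=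
    ((Fintype.bijective_iff_injective_and_card φ).mpr ⟨hφi, by simp [hcard]⟩).2
  have hkey : ∀ a b : Fin D.card, relFin v a b ↔ leOf r (eD a : ℕ) (eD b : ℕ) := by
    intro a b
    constructor
    · rintro (rfl | h)
      · exact Or.inl rfl
      · exact Or.inr h
    · rintro (h | h)
      · exact Or.inl (eD.injective (Subtype.ext h))
      · exact Or.inr h
  refine ⟨v, ⟨?_, ?_⟩, ⟨φ, hφi, ?_, ?_⟩, ⟨fun a => (eD a : ℕ), ?_, hkey, ?_⟩⟩
  · intro a b h
    have hlt : (eD a : ℕ) < (eD b : ℕ) := r_lt h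
    exact eD.lt_iff_lt.mp (Subtype.coe_lt_coe.mp hlt)
  · intro a b c h1 h2
    exact r_trans h1 h2
  · intro i j
    rw [hff i j, hkey (φ i) (φ j), hφeD i, hφeD j]
  · intro a j h
    have : leOf r (eD a : ℕ) (f j) := by
      have := (hkey a (φ j)).mp h
      rwa [hφeD j] at this
    obtain ⟨i, hi⟩ := hfd _ j this
    refine ⟨i, ?_⟩
    have hv2 : (eD (φ i) : ℕ) = (eD a : ℕ) := by rw [hφeD i, hi]
    exact eD.injective (Subtype.ext hv2)
  · intro a b hab
    exact eD.injective (Subtype.ext hab)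
  · intro x b hx
    rcases hx with hx | hx
    · exact ⟨b, hx.symm⟩
    · obtain ⟨j, hj⟩ := hφsurj b
      have hbj : (eD b : ℕ) = f j := by rw [← hj, hφeD j]
      have : leOf r x (f j) := by rw [← hbj]; exact Or.inr hx
      obtain ⟨i, hi⟩ := hfd x j this
      refine ⟨φ i, ?_⟩
      show (eD (φ i) : ℕ) = x
      rw [hφeD i, hi]

/-- Core presentation lemma: present a finite downclosed set `E` containing the image of a
realized code `c` as a natural code end-extending `c`. -/
lemma corePresent {r : OmegaT} {c : LC} (hNB : NB c) (gc : Fin c.1 → ℕ)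
    (hinj : Function.Injective gc)
    (hiff : ∀ i j, relFin c i j ↔ leOf r (gc i) (gc j))
    (hdc : ∀ (x : ℕ) (j : Fin c.1), leOf r x (gc j) → ∃ i, gc i = x)
    (E : Finset ℕ) (hE : ∀ x ∈ E, ∀ y, leOf r y x → y ∈ E)
    (hDcE : ∀ i, gc i ∈ E) :
    ∃ (d : LC) (emap : Fin d.1 → ℕ),
      NB d ∧ endExt c d ∧ d.1 = E.card ∧
      Function.Injective emap ∧ (∀ i, emap i ∈ E) ∧ (∀ y ∈ E, ∃ i, emap i = y) ∧
      (∀ i j, relFin d i j ↔ leOf r (emap i) (emap j)) := by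
  classical
  have hDcsub : Finset.image gc Finset.univ ⊆ E := by
    intro x hx
    obtain ⟨i, _, rfl⟩ := Finset.mem_image.mp hx
    exact hDcE i
  have hcardDc : (Finset.image gc Finset.univ).card = c.1 := by
    rw [Finset.card_image_of_injective _ hinj, Finset.card_univ, Fintype.card_fin]
  set R : Finset ℕ := E \ Finset.image gc Finset.univ with hR
  have hcardR : R.card = E.card - c.1 := by
    rw [hR, Finset.card_sdiff_of_subset hDcsub, hcardDc]
  have hnE : c.1 ≤ E.card := by
    rw [← hcardDc]; exact Finset.card_le_card hDcsub
  have hmE : c.1 + R.card = E.card := by omega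
  set eR := R.orderIsoOfFin rfl with heR
  have hidx : ∀ i : Fin (c.1 + R.card), ¬ ((i : ℕ) < c.1) → (i : ℕ) - c.1 < R.card := by
    intro i h
    have := i.2
    omega
  set emap : Fin (c.1 + R.card) → ℕ :=
    fun i => if h : (i : ℕ) < c.1 then gc ⟨(i : ℕ), h⟩
      else (eR ⟨(i : ℕ) - c.1, hidx i h⟩ : ℕ) with hemap
  have emap_lt : ∀ (i : Fin (c.1 + R.card)) (h : (i : ℕ) < c.1), emap i = gc ⟨(i : ℕ), h⟩ := by
    intro i h
    simp only [hemap, dif_pos h]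
  have emap_ge : ∀ (i : Fin (c.1 + R.card)) (h : ¬ (i : ℕ) < c.1),
      emap i = (eR ⟨(i : ℕ) - c.1, hidx i h⟩ : ℕ) := by
    intro i h
    simp only [hemap, dif_neg h]
  have emap_mem_R : ∀ (i : Fin (c.1 + R.card)) (h : ¬ (i : ℕ) < c.1), emap i ∈ R := by
    intro i h
    rw [emap_ge i h]
    exact (eR ⟨(i : ℕ) - c.1, hidx i h⟩).2
  have emap_mem : ∀ i, emap i ∈ E := by
    intro i
    by_cases h : (i : ℕ) < c.1
    · rw [emap_lt i h]; exact hDcE _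
    · exact (Finset.mem_sdiff.mp (emap_mem_R i h)).1
  have emap_inj : Function.Injective emap := by
    intro a b hab
    by_cases ha : (a : ℕ) < c.1 <;> by_cases hb : (b : ℕ) < c.1
    · rw [emap_lt a ha, emap_lt b hb] at hab
      have h2 := hinj hab
      have h3 : (a : ℕ) = (b : ℕ) := by
        have := congrArg Fin.val h2
        simpa using this
      exact Fin.ext h3
    · exfalso
      rw [emap_lt a ha] at hab
      have hmem : emap b ∈ R := emap_mem_R b hb
      rw [← hab] at hmem
      exact (Finset.mem_sdiff.mp hmem).2 (Finset.mem_image.mpr ⟨_, Finset.mem_univ _, rfl⟩)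
    · exfalso
      rw [emap_lt b hb] at hab
      have hmem : emap a ∈ R := emap_mem_R a ha
      rw [hab] at hmem
      exact (Finset.mem_sdiff.mp hmem).2 (Finset.mem_image.mpr ⟨_, Finset.mem_univ _, rfl⟩)
    · rw [emap_ge a ha, emap_ge b hb] at hab
      have h1 : (⟨(a : ℕ) - c.1, hidx a ha⟩ : Fin R.card) = ⟨(b : ℕ) - c.1, hidx b hb⟩ :=
        eR.injective (Subtype.ext hab)
      have h2 := congrArg Fin.val h1
      simp only at h2
      have := a.2
      have := b.2
      apply Fin.ext
      omega
  have emap_surj : ∀ y ∈ E, ∃ i, emap i = y := by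
    intro y hy
    by_cases hyD : y ∈ Finset.image gc Finset.univ
    · obtain ⟨j, _, rfl⟩ := Finset.mem_image.mp hyD
      have hj : (j : ℕ) < c.1 + R.card := by have := j.2; omega
      refine ⟨⟨(j : ℕ), hj⟩, ?_⟩
      rw [emap_lt ⟨(j : ℕ), hj⟩ j.2]
    · have hyR : y ∈ R := Finset.mem_sdiff.mpr ⟨hy, hyD⟩
      obtain ⟨a, ha⟩ := eR.surjective ⟨y, hyR⟩
      have hi : c.1 + (a : ℕ) < c.1 + R.card := by have := a.2; omega
      refine ⟨⟨c.1 + (a : ℕ), hi⟩, ?_⟩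
      have hnot : ¬ ((⟨c.1 + (a : ℕ), hi⟩ : Fin (c.1 + R.card)) : ℕ) < c.1 := by simp
      rw [emap_ge _ hnot]
      have : (⟨((⟨c.1 + (a : ℕ), hi⟩ : Fin (c.1 + R.card)) : ℕ) - c.1, hidx _ hnot⟩ : Fin R.card) = a := by
        apply Fin.ext
        simp
      rw [this, ha]
  set d : LC := ⟨c.1 + R.card, fun i j => (r : (ℕ × ℕ) → Bool) (emap i, emap j)⟩ with hd
  have hcore : ∀ i j : Fin (c.1 + R.card),
      relFin d i j ↔ leOf r (emap i) (emap j) := by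
    intro i j
    constructor
    · rintro (rfl | h)
      · exact Or.inl rfl
      · exact Or.inr h
    · rintro (h | h)
      · exact Or.inl (emap_inj h)
      · exact Or.inr h
  have hentry : ∀ a b : Fin c.1, (r : (ℕ × ℕ) → Bool) (gc a, gc b) = c.2 a b := by
    intro a b
    cases hcb : c.2 a b with
    | true =>
      have : relFin c a b := Or.inr hcb
      rcases (hiff a b).mp this with heq | hlt
      · exfalso
        have hab : a = b := hinj heq
        subst hab
        exact absurd (hNB.1 a a hcb) (lt_irrefl _)
      · exact hlt
    | false =>
      by_contra hcon
      have hrt : (r : (ℕ × ℕ) → Bool) (gc a, gc b) = true := by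
        cases hv : (r : (ℕ × ℕ) → Bool) (gc a, gc b)
        · exact absurd hv hcon
        · rfl
      have : relFin c a b := (hiff a b).mpr (Or.inr hrt)
      rcases this with rfl | h
      · exact absurd (r_lt hrt) (lt_irrefl _)
      · rw [h] at hcb; exact Bool.true_eq_false.mp hcb
  refine ⟨d, emap, ⟨?_, ?_⟩, ⟨Nat.le_add_right _ _, ?_⟩, by simpa using hmE, emap_inj, emap_mem, emap_surj, hcore⟩
  · -- natural
    intro i j h
    have h0 : (r : (ℕ × ℕ) → Bool) (emap i, emap j) = true := h
    have hlt : emap i < emap j := r_lt h0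
    by_cases hi : (i : ℕ) < c.1 <;> by_cases hj : (j : ℕ) < c.1
    · -- both in prefix
      rw [emap_lt i hi, emap_lt j hj] at h0 hlt
      have hcb : c.2 ⟨(i : ℕ), hi⟩ ⟨(j : ℕ), hj⟩ = true := by rw [← hentry]; exact h0
      exact hNB.1 _ _ hcb
    · show (i : ℕ) < (j : ℕ)
      omega
    · exfalso
      rw [emap_lt j hj] at hlt h0
      obtain ⟨i', hi'⟩ := hdc (emap i) ⟨(j : ℕ), hj⟩ (Or.inr h0)
      have hmem : emap i ∈ R := emap_mem_R i hi
      rw [← hi'] at hmem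
      exact (Finset.mem_sdiff.mp hmem).2 (Finset.mem_image.mpr ⟨_, Finset.mem_univ _, rfl⟩)
    · -- both in rest
      rw [emap_ge i hi, emap_ge j hj] at hlt
      have h1 : (⟨(i : ℕ) - c.1, hidx i hi⟩ : Fin R.card) < ⟨(j : ℕ) - c.1, hidx j hj⟩ :=
        eR.lt_iff_lt.mp (Subtype.coe_lt_coe.mp hlt)
      have h2 : (i : ℕ) - c.1 < (j : ℕ) - c.1 := h1
      show (i : ℕ) < (j : ℕ)
      omega
  · -- transitive
    intro i j k h1 h2
    exact r_trans h1 h2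
  · -- endExt entries
    intro i j hi hj hi' hj'
    show (r : (ℕ × ℕ) → Bool) (emap ⟨i, hi'⟩, emap ⟨j, hj'⟩) = c.2 ⟨i, hi⟩ ⟨j, hj⟩
    rw [emap_lt ⟨i, hi'⟩ hi, emap_lt ⟨j, hj'⟩ hj]
    exact hentry _ _

/-- Presentation of a downclosed superset with a fresh point added. -/
lemma present_down {r : OmegaT} {c : LC} (hNB : NB c) (gc : Fin c.1 → ℕ)
    (hinj : Function.Injective gc)
    (hiff : ∀ i j, relFin c i j ↔ leOf r (gc i) (gc j))
    (hdc : ∀ (x : ℕ) (j : Fin c.1), leOf r x (gc j) → ∃ i, gc i = x)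
    (E0 : Finset ℕ) (hE0 : ∀ x ∈ E0, ∀ y, leOf r y x → y ∈ E0)
    (hgcE : ∀ i, gc i ∈ E0) :
    ∃ (d : LC) (emap : Fin d.1 → ℕ),
      NB d ∧ endExt c d ∧ c.1 < d.1 ∧ Function.Injective emap ∧
      (∀ i j, relFin d i j ↔ leOf r (emap i) (emap j)) ∧
      (∀ y ∈ E0, ∃ i, emap i = y) ∧ Rz d r := by
  classical
  have hex : ∃ x : ℕ, x ∉ E0 := by
    refine ⟨E0.sup id + 1, fun hmem => ?_⟩
    have := Finset.le_sup (f := id) hmem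
    simp only [id] at this
    omega
  set x := Nat.find hex with hx
  have hxE : x ∉ E0 := Nat.find_spec hex
  have hxmin : ∀ y, y < x → y ∈ E0 := by
    intro y hy
    by_contra hyE
    exact absurd (Nat.find_min hex hy) (fun a => a hyE)
  set E : Finset ℕ := insert x E0 with hE
  have hEdc : ∀ z ∈ E, ∀ y, leOf r y z → y ∈ E := by
    intro z hz y hyz
    rcases Finset.mem_insert.mp hz with rfl | hz0
    · rcases hyz with rfl | hyz
      · exact Finset.mem_insert_self _ _
      · exact Finset.mem_insert_of_mem (hxmin y (r_lt hyz))
    · exact Finset.mem_insert_of_mem (hE0 z hz0 y hyz)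
  have hgcE' : ∀ i, gc i ∈ E := fun i => Finset.mem_insert_of_mem (hgcE i)
  obtain ⟨d, emap, hdNB, hdext, hdcard, hei, hemem, hesurj, hecore⟩ :=
    corePresent hNB gc hinj hiff hdc E hEdc hgcE'
  have hsize : c.1 < d.1 := by
    rw [hdcard, hE, Finset.card_insert_of_notMem hxE]
    have h1 : (Finset.image gc Finset.univ).card = c.1 := by
      rw [Finset.card_image_of_injective _ hinj, Finset.card_univ, Fintype.card_fin]
    have h2 : Finset.image gc Finset.univ ⊆ E0 := by
      intro z hz
      obtain ⟨i, _, rfl⟩ := Finset.mem_image.mp hz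
      exact hgcE i
    have := Finset.card_le_card h2
    omega
  refine ⟨d, emap, hdNB, hdext, hsize, hei, hecore, ?_, ?_⟩
  · intro y hy
    exact hesurj y (Finset.mem_insert_of_mem hy)
  · refine ⟨emap, hei, hecore, ?_⟩
    intro z j hz
    have hzE : z ∈ E := hEdc (emap j) (hemem j) z hz
    exact hesurj z hzE

/-- The key existence lemma for one construction step. -/
lemma step_exists (r : OmegaT) (c t : LC) (hNB : NB c) (hRz : Rz c r) :
    ∃ d : LC, NB d ∧ endExt c d ∧ c.1 < d.1 ∧ Rz d r ∧ ((NB t ∧ Rz t r) → EmbD t d) := by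
  classical
  obtain ⟨gc, hgci, hgcf, hgcd⟩ := hRz
  by_cases ht : NB t ∧ Rz t r
  · obtain ⟨gt, hgti, hgtf, hgtd⟩ := ht.2
    set E0 : Finset ℕ := Finset.image gc Finset.univ ∪ Finset.image gt Finset.univ with hE0
    have hE0dc : ∀ z ∈ E0, ∀ y, leOf r y z → y ∈ E0 := by
      intro z hz y hyz
      rcases Finset.mem_union.mp hz with hz | hz
      · obtain ⟨j, _, rfl⟩ := Finset.mem_image.mp hz
        obtain ⟨i, hi⟩ := hgcd y j hyz
        exact Finset.mem_union_left _ (Finset.mem_image.mpr ⟨i, Finset.mem_univ _, hi⟩)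
      · obtain ⟨j, _, rfl⟩ := Finset.mem_image.mp hz
        obtain ⟨i, hi⟩ := hgtd y j hyz
        exact Finset.mem_union_right _ (Finset.mem_image.mpr ⟨i, Finset.mem_univ _, hi⟩)
    have hgcE : ∀ i, gc i ∈ E0 :=
      fun i => Finset.mem_union_left _ (Finset.mem_image.mpr ⟨i, Finset.mem_univ _, rfl⟩)
    obtain ⟨d, emap, hdNB, hdext, hsize, hei, hecore, hesurj, hdRz⟩ :=
      present_down hNB gc hgci hgcf hgcd E0 hE0dc hgcE
    refine ⟨d, hdNB, hdext, hsize, hdRz, fun _ => ?_⟩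
    have hgtE : ∀ i, gt i ∈ E0 :=
      fun i => Finset.mem_union_right _ (Finset.mem_image.mpr ⟨i, Finset.mem_univ _, rfl⟩)
    have hpre : ∀ i : Fin t.1, ∃ a, emap a = gt i := fun i => hesurj (gt i) (hgtE i)
    set φ : Fin t.1 → Fin d.1 := fun i => (hpre i).choose with hφ
    have hφe : ∀ i, emap (φ i) = gt i := fun i => (hpre i).choose_spec
    have hφi : Function.Injective φ := by
      intro i j hij
      apply hgti
      rw [← hφe i, ← hφe j, hij]
    refine ⟨φ, hφi, ?_, ?_⟩
    · intro i j
      rw [hgtf i j, hecore (φ i) (φ j), hφe i, hφe j]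
    · intro a j ha
      have h1 : leOf r (emap a) (gt j) := by
        have := (hecore a (φ j)).mp ha
        rwa [hφe j] at this
      obtain ⟨i, hi⟩ := hgtd (emap a) j h1
      refine ⟨i, hei ?_⟩
      rw [hφe i, hi]
  · set E0 : Finset ℕ := Finset.image gc Finset.univ with hE0
    have hE0dc : ∀ z ∈ E0, ∀ y, leOf r y z → y ∈ E0 := by
      intro z hz y hyz
      obtain ⟨j, _, rfl⟩ := Finset.mem_image.mp hz
      obtain ⟨i, hi⟩ := hgcd y j hyz
      exact Finset.mem_image.mpr ⟨i, Finset.mem_univ _, hi⟩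
    have hgcE : ∀ i, gc i ∈ E0 :=
      fun i => Finset.mem_image.mpr ⟨i, Finset.mem_univ _, rfl⟩
    obtain ⟨d, emap, hdNB, hdext, hsize, hei, hecore, hesurj, hdRz⟩ :=
      present_down hNB gc hgci hgcf hgcd E0 hE0dc hgcE
    exact ⟨d, hdNB, hdext, hsize, hdRz, fun h => absurd h ht⟩

noncomputable def gLC : ℕ → LC := (exists_surjective_nat LC).choose

lemma gLC_surj : Function.Surjective gLC := (exists_surjective_nat LC).choose_spec

/-- The step predicate. -/
def PStep (r : OmegaT) (c t : LC) (l : ℕ) : Prop :=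
  NB (gLC l) ∧ endExt c (gLC l) ∧ c.1 < (gLC l).1 ∧ Rz (gLC l) r ∧
    ((NB t ∧ Rz t r) → EmbD t (gLC l))

noncomputable def stepIdx (r : OmegaT) (c t : LC) : ℕ :=
  if h : ∃ l, PStep r c t l then Nat.find h + 1 else 0

noncomputable def stepC (r : OmegaT) (c t : LC) : LC :=
  match stepIdx r c t with
  | 0 => c
  | (l+1) => gLC l

noncomputable def CK (r : OmegaT) : ℕ → LC
  | 0 => ⟨0, fun _ _ => false⟩
  | (k+1) => stepC r (CK r k) (gLC k)

lemma stepC_of_pos {r : OmegaT} {c t : LC} (h : ∃ l, PStep r c t l) :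
    stepC r c t = gLC (Nat.find h) := by
  unfold stepC stepIdx
  rw [dif_pos h]

lemma nb_zero (r : OmegaT) : NB (CK r 0) ∧ Rz (CK r 0) r := by
  constructor
  · exact ⟨fun i => i.elim0, fun i => i.elim0⟩
  · exact ⟨Fin.elim0, fun i => i.elim0, fun i => i.elim0, fun x j => j.elim0⟩

lemma inv (r : OmegaT) (k : ℕ) : NB (CK r k) ∧ Rz (CK r k) r := by
  induction k with
  | zero => exact nb_zero r
  | succ k ih =>
    have hex : ∃ l, PStep r (CK r k) (gLC k) l := by
      obtain ⟨d, hdNB, hdext, hsize, hdRz, hemb⟩ := step_exists r (CK r k) (gLC k) ih.1 ih.2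
      obtain ⟨l, rfl⟩ := gLC_surj d
      exact ⟨l, hdNB, hdext, hsize, hdRz, hemb⟩
    have hspec := Nat.find_spec hex
    have heq : CK r (k+1) = gLC (Nat.find hex) := stepC_of_pos hex
    rw [heq]
    exact ⟨hspec.1, hspec.2.2.2.1⟩

lemma step_success (r : OmegaT) (k : ℕ) : ∃ l, PStep r (CK r k) (gLC k) l := by
  obtain ⟨d, hdNB, hdext, hsize, hdRz, hemb⟩ :=
    step_exists r (CK r k) (gLC k) (inv r k).1 (inv r k).2
  obtain ⟨l, rfl⟩ := gLC_surj d
  exact ⟨l, hdNB, hdext, hsize, hdRz, hemb⟩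

lemma CK_succ_spec (r : OmegaT) (k : ℕ) :
    ∃ l, CK r (k+1) = gLC l ∧ PStep r (CK r k) (gLC k) l := by
  have hex := step_success r k
  exact ⟨Nat.find hex, stepC_of_pos hex, Nat.find_spec hex⟩

lemma endExt_step (r : OmegaT) (k : ℕ) : endExt (CK r k) (CK r (k+1)) := by
  obtain ⟨l, hl, hP⟩ := CK_succ_spec r k
  rw [hl]
  exact hP.2.1

lemma size_lt (r : OmegaT) (k : ℕ) : (CK r k).1 < (CK r (k+1)).1 := by
  obtain ⟨l, hl, hP⟩ := CK_succ_spec r k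
  rw [hl]
  exact hP.2.2.1

lemma size_ge (r : OmegaT) (k : ℕ) : k ≤ (CK r k).1 := by
  induction k with
  | zero => omega
  | succ k ih => have := size_lt r k; omega

lemma size_mono (r : OmegaT) {k k' : ℕ} (h : k ≤ k') : (CK r k).1 ≤ (CK r k').1 := by
  induction k', h using Nat.le_induction with
  | base => exact le_refl _
  | succ k' hk ih => have := size_lt r k'; omega

lemma entry_stable (r : OmegaT) {k k' : ℕ} (h : k ≤ k') {i j : ℕ}
    (hik : i < (CK r k).1) (hjk : j < (CK r k).1) (hik' : i < (CK r k').1) (hjk' : j < (CK r k').1) :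
    (CK r k').2 ⟨i, hik'⟩ ⟨j, hjk'⟩ = (CK r k).2 ⟨i, hik⟩ ⟨j, hjk⟩ := by
  induction k', h using Nat.le_induction with
  | base => rfl
  | succ k' hk ih =>
    have hik'' : i < (CK r k').1 := lt_of_lt_of_le hik (size_mono r hk)
    have hjk'' : j < (CK r k').1 := lt_of_lt_of_le hjk (size_mono r hk)
    rw [(endExt_step r k').2 i j hik'' hjk'' hik' hjk']
    exact ih hik'' hjk''

lemma entry_eq (r : OmegaT) {k k' : ℕ} {i j : ℕ}
    (hik : i < (CK r k).1) (hjk : j < (CK r k).1) (hik' : i < (CK r k').1) (hjk' : j < (CK r k').1) :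
    (CK r k').2 ⟨i, hik'⟩ ⟨j, hjk'⟩ = (CK r k).2 ⟨i, hik⟩ ⟨j, hjk⟩ := by
  rcases le_total k k' with h | h
  · exact entry_stable r h hik hjk hik' hjk'
  · exact (entry_stable r h hik' hjk' hik hjk).symm

/-- The limit relation. -/
noncomputable def rho (r : OmegaT) : (ℕ × ℕ) → Bool := fun p =>
  (CK r (max p.1 p.2 + 1)).2
    ⟨p.1, lt_of_lt_of_le (by omega) (size_ge r (max p.1 p.2 + 1))⟩
    ⟨p.2, lt_of_lt_of_le (by omega) (size_ge r (max p.1 p.2 + 1))⟩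

lemma rho_entry' (r : OmegaT) {k : ℕ} {i j : ℕ} (hik : i < (CK r k).1) (hjk : j < (CK r k).1) :
    rho r (i, j) = (CK r k).2 ⟨i, hik⟩ ⟨j, hjk⟩ := by
  unfold rho
  exact entry_eq r hik hjk _ _

lemma rho_mem (r : OmegaT) : rho r ∈ OmegaT := by
  constructor
  · intro x y z h1 h2
    have hx : x < (CK r (x + y + z + 1)).1 := lt_of_lt_of_le (by omega) (size_ge r _)
    have hy : y < (CK r (x + y + z + 1)).1 := lt_of_lt_of_le (by omega) (size_ge r _)
    have hz : z < (CK r (x + y + z + 1)).1 := lt_of_lt_of_le (by omega) (size_ge r _)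
    rw [rho_entry' r hx hy] at h1
    rw [rho_entry' r hy hz] at h2
    rw [rho_entry' r hx hz]
    exact (inv r (x + y + z + 1)).1.2 _ _ _ h1 h2
  · intro x y h
    have hx : x < (CK r (max x y + 1)).1 := lt_of_lt_of_le (by omega) (size_ge r _)
    have hy : y < (CK r (max x y + 1)).1 := lt_of_lt_of_le (by omega) (size_ge r _)
    rw [rho_entry' r hx hy] at h
    exact (inv r (max x y + 1)).1.1 _ _ h

noncomputable def recon (r : OmegaT) : OmegaT := ⟨rho r, rho_mem r⟩

/-- Initial segments of the limit realize the chain codes. -/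
lemma initialSeg (r : OmegaT) (k : ℕ) : IsStemIn (relFin (CK r k)) (leOf (recon r)) := by
  refine ⟨fun i => (i : ℕ), fun a b hab => Fin.ext hab, ?_, ?_⟩
  · intro i j
    constructor
    · rintro (rfl | h)
      · exact Or.inl rfl
      · refine Or.inr ?_
        show rho r ((i : ℕ), (j : ℕ)) = true
        rw [rho_entry' r i.2 j.2]
        exact h
    · rintro (h | h)
      · exact Or.inl (Fin.ext h)
      · refine Or.inr ?_
        have h' : rho r ((i : ℕ), (j : ℕ)) = true := h
        rwa [rho_entry' r i.2 j.2] at h'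
  · intro x j hx
    rcases hx with hx | hx
    · exact ⟨j, hx.symm⟩
    · have hx' : rho r (x, (j : ℕ)) = true := hx
      have hxy : x < (j : ℕ) := (rho_mem r).2 x (j : ℕ) hx'
      exact ⟨⟨x, lt_trans hxy j.2⟩, rfl⟩

/-- stems of recon r are stems of r. -/
lemma stem_recon_to_r (r : OmegaT) {n : ℕ} {s : Fin n → Fin n → Prop}
    (hs : IsStemIn s (leOf (recon r))) : IsStemIn s (leOf r) := by
  obtain ⟨f, hfi, hff, hfd⟩ := hs
  set M : ℕ := (Finset.univ.sup fun i : Fin n => f i) + 1 with hM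
  have hfM : ∀ i, f i < (CK r M).1 := by
    intro i
    have h1 : f i ≤ Finset.univ.sup (fun i : Fin n => f i) :=
      Finset.le_sup (Finset.mem_univ i)
    have h2 := size_ge r M
    omega
  have h1 : IsStemIn s (relFin (CK r M)) := by
    refine ⟨fun i => ⟨f i, hfM i⟩, ?_, ?_, ?_⟩
    · intro a b hab
      exact hfi (congrArg Fin.val hab)
    · intro i j
      rw [hff i j]
      constructor
      · rintro (h | h)
        · exact Or.inl (Fin.ext h)
        · refine Or.inr ?_
          have h' : rho r (f i, f j) = true := h
          rwa [rho_entry' r (hfM i) (hfM j)] at h'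
      · rintro (h | h)
        · exact Or.inl (congrArg Fin.val h)
        · refine Or.inr ?_
          show rho r (f i, f j) = true
          rwa [rho_entry' r (hfM i) (hfM j)]
    · intro a j ha
      have ha' : leOf (recon r) (a : ℕ) (f j) := by
        rcases ha with h | h
        · exact Or.inl (congrArg Fin.val h)
        · refine Or.inr ?_
          show rho r ((a : ℕ), f j) = true
          rw [rho_entry' r a.2 (hfM j)]
          exact h
      obtain ⟨i, hi⟩ := hfd (a : ℕ) j ha'
      exact ⟨i, Fin.ext hi⟩
  exact stemTrans h1 (inv r M).2

/-- realized natural codes of r are realized in recon r. -/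
lemma code_r_to_recon (r : OmegaT) {v : LC} (hNB : NB v) (hRz : Rz v r) : Rz v (recon r) := by
  obtain ⟨l, rfl⟩ := gLC_surj v
  obtain ⟨l', hl', hP⟩ := CK_succ_spec r l
  have hemb : EmbD (gLC l) (CK r (l + 1)) := by
    rw [hl']
    exact hP.2.2.2.2 ⟨hNB, hRz⟩
  exact stemTrans hemb (initialSeg r (l + 1))

lemma sameStems_recon (r : OmegaT) : SameStems (leOf r) (leOf (recon r)) := by
  intro n s
  constructor
  · intro hs
    obtain ⟨v, hvNB, hsv, hvRz⟩ := exists_code_of_stem hs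
    exact stemTrans hsv (code_r_to_recon r hvNB hvRz)
  · exact stem_recon_to_r r

------------------------------------------------------------------------------
-- measurability
------------------------------------------------------------------------------

local notation "MS" => MeasurableSet[MeasurableSpace.generateFrom stemFamily]

lemma ms_PStep (c t : LC) (l : ℕ) : MS {r : OmegaT | PStep r c t l} := by
  by_cases hK : NB (gLC l) ∧ endExt c (gLC l) ∧ c.1 < (gLC l).1
  · by_cases hNBt : NB t
    · by_cases hEmb : EmbD t (gLC l)
      · have hs : {r : OmegaT | PStep r c t l} = {r : OmegaT | Rz (gLC l) r} := by
          ext r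
          simp only [Set.mem_setOf_eq, PStep]
          constructor
          · rintro ⟨_, _, _, h, _⟩; exact h
          · intro h; exact ⟨hK.1, hK.2.1, hK.2.2, h, fun _ => hEmb⟩
        rw [hs]; exact stemSet_mem_family hK.1
      · have hs : {r : OmegaT | PStep r c t l} =
            {r : OmegaT | Rz (gLC l) r} ∩ {r : OmegaT | Rz t r}ᶜ := by
          ext r
          simp only [Set.mem_setOf_eq, Set.mem_inter_iff, Set.mem_compl_iff, PStep]
          constructor
          · rintro ⟨_, _, _, h, himp⟩
            exact ⟨h, fun hRzt => hEmb (himp ⟨hNBt, hRzt⟩)⟩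
          · rintro ⟨h, hn⟩
            exact ⟨hK.1, hK.2.1, hK.2.2, h, fun hc => absurd hc.2 hn⟩
        rw [hs]
        exact (stemSet_mem_family hK.1).inter (stemSet_mem_family hNBt).compl
    · have hs : {r : OmegaT | PStep r c t l} = {r : OmegaT | Rz (gLC l) r} := by
        ext r
        simp only [Set.mem_setOf_eq, PStep]
        constructor
        · rintro ⟨_, _, _, h, _⟩; exact h
        · intro h; exact ⟨hK.1, hK.2.1, hK.2.2, h, fun hc => absurd hc.1 hNBt⟩
      rw [hs]; exact stemSet_mem_family hK.1
  · have hs : {r : OmegaT | PStep r c t l} = ∅ := by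
      ext r
      simp only [Set.mem_setOf_eq, Set.mem_empty_iff_false, iff_false]
      rintro ⟨h1, h2, h3, _, _⟩
      exact hK ⟨h1, h2, h3⟩
    rw [hs]; exact @MeasurableSet.empty _ (MeasurableSpace.generateFrom stemFamily)

lemma ms_stepIdx (c t : LC) (i : ℕ) : MS {r : OmegaT | stepIdx r c t = i} := by
  match i with
  | 0 =>
    have hs : {r : OmegaT | stepIdx r c t = 0} = ⋂ l, {r : OmegaT | PStep r c t l}ᶜ := by
      ext r
      simp only [Set.mem_setOf_eq, Set.mem_iInter, Set.mem_compl_iff]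
      constructor
      · intro h l hP
        unfold stepIdx at h
        rw [dif_pos ⟨l, hP⟩] at h
        omega
      · intro h
        unfold stepIdx
        rw [dif_neg]
        rintro ⟨l, hl⟩
        exact h l hl
    rw [hs]
    exact MeasurableSet.iInter fun l => (ms_PStep c t l).compl
  | (l + 1) =>
    have hs : {r : OmegaT | stepIdx r c t = l + 1} =
        {r : OmegaT | PStep r c t l} ∩ ⋂ (l' : ℕ) (_ : l' < l), {r : OmegaT | PStep r c t l'}ᶜ := by
      ext r
      simp only [Set.mem_setOf_eq, Set.mem_inter_iff, Set.mem_iInter, Set.mem_compl_iff]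
      constructor
      · intro h
        unfold stepIdx at h
        by_cases hex : ∃ l0, PStep r c t l0
        · rw [dif_pos hex] at h
          have hfind : Nat.find hex = l := by omega
          constructor
          · exact hfind ▸ Nat.find_spec hex
          · intro l' hl' hP
            exact Nat.find_min hex (by omega) hP
        · rw [dif_neg hex] at h; omega
      · rintro ⟨hP, hmin⟩
        have hex : ∃ l0, PStep r c t l0 := ⟨l, hP⟩
        unfold stepIdx
        rw [dif_pos hex]
        have hfind : Nat.find hex = l := by
          rw [Nat.find_eq_iff]
          exact ⟨hP, fun l' hl' => hmin l' hl'⟩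
        omega
    rw [hs]
    exact (ms_PStep c t l).inter
      (MeasurableSet.iInter fun l' => MeasurableSet.iInter fun _ => (ms_PStep c t l').compl)

/-- the outcome of a step as a function of the chosen index. -/
noncomputable def stepOut (w : LC) : ℕ → LC
  | 0 => w
  | (l + 1) => gLC l

lemma stepC_eq_out (r : OmegaT) (w t : LC) : stepC r w t = stepOut w (stepIdx r w t) := by
  unfold stepC
  cases h : stepIdx r w t with
  | zero => rfl
  | succ l => rfl

lemma ms_CK (k : ℕ) (v : LC) : MS {r : OmegaT | CK r k = v} := by
  induction k generalizing v with
  | zero =>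
    by_cases h : (⟨0, fun _ _ => false⟩ : LC) = v
    · have hs : {r : OmegaT | CK r 0 = v} = Set.univ := by
        ext r; simp [CK, h]
      rw [hs]; exact @MeasurableSet.univ _ (MeasurableSpace.generateFrom stemFamily)
    · have hs : {r : OmegaT | CK r 0 = v} = ∅ := by
        ext r; simp [CK, h]
      rw [hs]; exact @MeasurableSet.empty _ (MeasurableSpace.generateFrom stemFamily)
  | succ k ih =>
    have hs : {r : OmegaT | CK r (k + 1) = v} =
        ⋃ (w : LC), ({r : OmegaT | CK r k = w} ∩
          ⋃ (i : ℕ) (_ : stepOut w i = v), {r : OmegaT | stepIdx r w (gLC k) = i}) := by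
      ext r
      simp only [Set.mem_setOf_eq, Set.mem_iUnion, Set.mem_inter_iff]
      constructor
      · intro h
        refine ⟨CK r k, rfl, stepIdx r (CK r k) (gLC k), ?_, rfl⟩
        rw [← stepC_eq_out]
        exact h
      · rintro ⟨w, hw, i, hout, hidx⟩
        show stepC r (CK r k) (gLC k) = v
        rw [hw, stepC_eq_out, hidx]
        exact hout
    rw [hs]
    exact MeasurableSet.iUnion fun w =>
      (ih w).inter (MeasurableSet.iUnion fun i => MeasurableSet.iUnion fun _ =>
        ms_stepIdx w (gLC k) i)

lemma ms_rho (p : ℕ × ℕ) : MS {r : OmegaT | rho r p = true} := by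
  obtain ⟨i, j⟩ := p
  have hb1 : ∀ r : OmegaT, i < (CK r (max i j + 1)).1 :=
    fun r => lt_of_lt_of_le (by omega) (size_ge r _)
  have hb2 : ∀ r : OmegaT, j < (CK r (max i j + 1)).1 :=
    fun r => lt_of_lt_of_le (by omega) (size_ge r _)
  have hs : {r : OmegaT | rho r (i, j) = true} =
      ⋃ (v : LC) (_ : ∃ (h1 : i < v.1) (h2 : j < v.1), v.2 ⟨i, h1⟩ ⟨j, h2⟩ = true),
        {r : OmegaT | CK r (max i j + 1) = v} := by
    ext r
    simp only [Set.mem_setOf_eq, Set.mem_iUnion]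
    constructor
    · intro h
      rw [rho_entry' r (hb1 r) (hb2 r)] at h
      exact ⟨CK r (max i j + 1), ⟨hb1 r, hb2 r, h⟩, rfl⟩
    · rintro ⟨v, ⟨h1, h2, hv⟩, hCK⟩
      rw [rho_entry' r (hb1 r) (hb2 r)]
      subst hCK
      exact hv
  rw [hs]
  exact MeasurableSet.iUnion fun v => MeasurableSet.iUnion fun _ => ms_CK _ v

lemma measurable_bool_of {α : Type} {m : MeasurableSpace α} (f : α → Bool)
    (h : MeasurableSet {x | f x = true}) : Measurable f := by
  intro t _
  have hs : f ⁻¹' t =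
      (if true ∈ t then {x | f x = true} else ∅) ∪
      (if false ∈ t then {x | f x = true}ᶜ else ∅) := by
    ext x
    simp only [Set.mem_preimage, Set.mem_union]
    cases hx : f x
    · by_cases hf : false ∈ t <;> by_cases ht : true ∈ t <;> simp [hf, ht, hx]
    · by_cases hf : false ∈ t <;> by_cases ht : true ∈ t <;> simp [hf, ht, hx]
  rw [hs]
  refine MeasurableSet.union ?_ ?_
  · by_cases ht : true ∈ t
    · rw [if_pos ht]; exact h
    · rw [if_neg ht]; exact MeasurableSet.empty
  · by_cases hf : false ∈ t
    · rw [if_pos hf]; exact h.compl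
    · rw [if_neg hf]; exact MeasurableSet.empty

lemma measurable_recon :
    @Measurable OmegaT OmegaT (MeasurableSpace.generateFrom stemFamily) (borel OmegaT) recon := by
  letI mS : MeasurableSpace OmegaT := MeasurableSpace.generateFrom stemFamily
  have hF : @Measurable OmegaT ((ℕ × ℕ) → Bool) mS _ (fun r => rho r) := by
    refine measurable_pi_iff.mpr fun p => ?_
    exact measurable_bool_of (m := mS) _ (ms_rho p)
  show @Measurable OmegaT OmegaT mS (MeasurableSpace.generateFrom {s : Set OmegaT | IsOpen s}) recon
  refine measurable_generateFrom ?_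
  intro U hU
  obtain ⟨V, hV, rfl⟩ := isOpen_induced_iff.mp hU
  have hpre : recon ⁻¹' (Subtype.val ⁻¹' V) = (fun r => rho r) ⁻¹' V := rfl
  rw [hpre]
  exact hF hV.measurableSet

end P2

theorem covariant_borel_eq_stem_set_up_to_rogues (A : Set OmegaT)
    (hA : MeasurableSet[borel OmegaT] A) (hinv : IsoInvariant A) :
    ∃ B : Set OmegaT, MeasurableSet[MeasurableSpace.generateFrom stemFamily] B ∧
      symmDiff A B ⊆ ThetaT := by
  refine ⟨P2.recon ⁻¹' A, P2.measurable_recon hA, ?_⟩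
  intro r hr
  by_contra hθ
  have hss : SameStems (leOf r) (leOf (P2.recon r)) := P2.sameStems_recon r
  have hiso : OrderIsoRel (leOf r) (leOf (P2.recon r)) := by
    by_contra hni
    exact hθ ⟨ℕ, leOf (P2.recon r), P2.isPartialOrder_leOf _, inferInstance,
      P2.pastFinite_leOf _, hni, hss⟩
  rcases Set.mem_symmDiff.1 hr with ⟨hA1, hB1⟩ | ⟨hB1, hA1⟩
  · exact hB1 (hinv r (P2.recon r) hiso hA1)
  · exact hA1 (hinv (P2.recon r) r (P2.orderIsoRel_symm hiso) hB1)
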